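/- Let A be a guidable automaton whose language is recognised by an automaton B, and set n = |A|·|B| + 1. For every tree t ∈ L(A), letting ρ_A be the run of A on t guided by an accepting run ρ_B of B, the edge labelling L_A induced by ρ_A is n-bound by the labelling L_B induced by ρ_B. (Proof via pigeonhole: among n+1 segment endpoints there are two with equal state pairs, and the pumping lemma then forbids an odd-dominated segment of ρ_A against an even-dominated segment of ρ_B.) -/

import Mathlib

/-- A sequence of priorities is parity accepting if its limsup is even. -/
def ParityAccepting (c : ℕ → ℕ) : Prop :=
  ∃ p, Even p ∧ (∃ᶠ n in Filter.atTop, c n = p) ∧ (∀ᶠ n in Filter.atTop, c n ≤ p)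

/-- A nondeterministic parity tree automaton over the alphabet `A`: transitions are tuples
`(q, a, q₀, q₁)` and `Ω` assigns a pair of priorities to the two directions of each
transition. -/
structure NPA (A : Type) where
  Q : Type
  qinit : Q
  Δ : Set (Q × A × Q × Q)
  Ω : Q × A × Q × Q → ℕ × ℕ

namespace NPA

variable {A : Type}

/-- Tree positions are words over {0,1}, modelled as `List Bool`; the children of `u` are
`u ++ [false]` and `u ++ [true]`. -/
abbrev Pos := List Bool

/-- `ρ : Pos → Δ` is a run of the automaton `M` on the input tree `t`. -/
def IsRun (M : NPA A) (t : Pos → A) (ρ : Pos → M.Q × A × M.Q × M.Q) : Prop :=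
  (∀ u, ρ u ∈ M.Δ) ∧
  (∀ u, (ρ u).2.1 = t u) ∧
  (ρ []).1 = M.qinit ∧
  (∀ u (b : Bool), (ρ (u ++ [b])).1 = if b then (ρ u).2.2.2 else (ρ u).2.2.1)

/-- The prefix of length `m` of a branch `β`. -/
def pre (β : ℕ → Bool) (m : ℕ) : Pos := (List.range m).map β

/-- The priority seen at depth `m` along the branch `β` in the run `ρ`. -/
def branchPrio (M : NPA A) (ρ : Pos → M.Q × A × M.Q × M.Q) (β : ℕ → Bool) (m : ℕ) : ℕ :=
  if β m then (M.Ω (ρ (pre β m))).2 else (M.Ω (ρ (pre β m))).1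

/-- A run is accepting if the priority sequence of every branch is parity accepting. -/
def AcceptingRun (M : NPA A) (ρ : Pos → M.Q × A × M.Q × M.Q) : Prop :=
  ∀ β : ℕ → Bool, ParityAccepting (branchPrio M ρ β)

/-- `g` is a guiding function from `B` to `M`: `g (p, (q, a, q₀, q₁))` is a transition of
`M` from state `p` over the letter `a`. -/
def IsGuidingFun (M B : NPA A) (g : M.Q × (B.Q × A × B.Q × B.Q) → M.Q × A × M.Q × M.Q) :
    Prop :=
  ∀ p δ, (g (p, δ)).1 = p ∧ (g (p, δ)).2.1 = δ.2.1

/-- The run `ρM` is guided by the run `ρB` via `g`: at every position, the transition taken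
by `ρM` is obtained by applying `g` to its own source state and the transition of `ρB`. -/
def GuidedBy (M B : NPA A) (g : M.Q × (B.Q × A × B.Q × B.Q) → M.Q × A × M.Q × M.Q)
    (ρM : Pos → M.Q × A × M.Q × M.Q) (ρB : Pos → B.Q × A × B.Q × B.Q) : Prop :=
  ∀ u, ρM u = g ((ρM u).1, ρB u)

/-- `g` preserves acceptance: any guided run of `M` obtained from an accepting run of `B`
is accepting. -/
def PreservesAcceptance (M B : NPA A)
    (g : M.Q × (B.Q × A × B.Q × B.Q) → M.Q × A × M.Q × M.Q) : Prop :=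
  ∀ (t : Pos → A) ρB ρM, IsRun B t ρB → IsRun M t ρM → GuidedBy M B g ρM ρB →
    AcceptingRun B ρB → AcceptingRun M ρM

/-- The priority seen at step `m` of the path segment from `u` to `u ++ v` in the run `ρ`. -/
def segPrio (M : NPA A) (ρ : Pos → M.Q × A × M.Q × M.Q) (u v : Pos) (m : ℕ) : ℕ :=
  if v.getD m false then (M.Ω (ρ (u ++ v.take m))).2 else (M.Ω (ρ (u ++ v.take m))).1

/-- The greatest priority encountered on the path segment from `u` to `u ++ v`. -/
def segMax (M : NPA A) (ρ : Pos → M.Q × A × M.Q × M.Q) (u v : Pos) : ℕ :=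
  (Finset.range v.length).sup (segPrio M ρ u v)

end NPA

section Stmt16

variable {V : Type}

/-- The maximal `L`-label of the segment `[a, b)` of the path `π` equals `p`. -/
def MaxSegLabel (L : V × V → ℕ) (π : ℕ → V) (a b p : ℕ) : Prop :=
  (∀ l, a ≤ l → l < b → L (π l, π (l+1)) ≤ p) ∧ ∃ l, a ≤ l ∧ l < b ∧ L (π l, π (l+1)) = p

/-- `LI` is `n`-bound by `LJ`: there is no finite path segmented into `n+1` consecutive
nonempty segments such that, for some odd `i` and even `j`, every segment has maximal
`LI`-label `i` and maximal `LJ`-label `j`. -/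
def NBound (E : Set (V × V)) (LI LJ : V × V → ℕ) (n : ℕ) : Prop :=
  ¬ ∃ (π : ℕ → V) (t : ℕ → ℕ) (i j : ℕ),
      Odd i ∧ Even j ∧
      (∀ m ≤ n, t m < t (m+1)) ∧
      (∀ l < t (n+1), (π l, π (l+1)) ∈ E) ∧
      (∀ m ≤ n, MaxSegLabel LI π (t m) (t (m+1)) i ∧ MaxSegLabel LJ π (t m) (t (m+1)) j)

end Stmt16

namespace NPA

/-- The edges of the infinite binary tree of positions. -/
def treeEdges : Set (Pos × Pos) := {p | ∃ b : Bool, p.2 = p.1 ++ [b]}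

/-- The priority labelling of the edges of the binary tree induced by a run `ρ` of `M`. -/
def runLabel {A : Type} (M : NPA A) (ρ : Pos → M.Q × A × M.Q × M.Q) : Pos × Pos → ℕ :=
  fun p => if p.2 = p.1 ++ [true] then (M.Ω (ρ p.1)).2 else (M.Ω (ρ p.1)).1

end NPA


/-! ### Auxiliary development for the pumping argument -/

namespace Guided

open NPA

open scoped Classical in
/-- Collapse a position of the pumped tree back to a position of the original tree by
repeatedly deleting the pumped segment `v` occurring after `u`. -/
noncomputable def collapse (u v : Pos) (hv : v ≠ []) (w : Pos) : Pos :=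
  if u ++ v <+: w then collapse u v hv (u ++ w.drop (u ++ v).length) else w
termination_by w.length
decreasing_by
  rename_i h
  have h1 : (u ++ v).length ≤ w.length := h.length_le
  have h2 : 0 < v.length := List.length_pos_iff.mpr hv
  simp only [List.length_append, List.length_drop] at *
  omega

variable {u v : Pos} (hv : v ≠ [])

lemma collapse_of_not_prefix {w : Pos} (h : ¬ u ++ v <+: w) : collapse u v hv w = w := by
  rw [collapse.eq_def]; simp [h]

lemma collapse_of_prefix {w : Pos} (h : u ++ v <+: w) :
    collapse u v hv w = collapse u v hv (u ++ w.drop (u ++ v).length) := by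
  conv_lhs => rw [collapse.eq_def]
  simp [h]

lemma collapse_of_short {w : Pos} (h : w.length < (u ++ v).length) : collapse u v hv w = w := by
  refine collapse_of_not_prefix hv (fun hp => ?_)
  exact absurd hp.length_le (by omega)

lemma collapse_append (s : Pos) : collapse u v hv (u ++ (v ++ s)) = collapse u v hv (u ++ s) := by
  rw [collapse_of_prefix hv (by rw [← List.append_assoc]; exact List.prefix_append _ s)]
  congr 1
  rw [← List.append_assoc, List.drop_append]
  simp

/-- `k` concatenated copies of `v`. -/
def vpow (v : Pos) : ℕ → Pos
  | 0 => []
  | k+1 => vpow v k ++ v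

lemma vpow_succ_front (v : Pos) (k : ℕ) : vpow v (k+1) = v ++ vpow v k := by
  induction k with
  | zero => simp [vpow]
  | succ k ih => show vpow v (k+1) ++ v = v ++ (vpow v k ++ v)
                 rw [ih, List.append_assoc]

lemma vpow_length (v : Pos) (k : ℕ) : (vpow v k).length = k * v.length := by
  induction k with
  | zero => simp [vpow]
  | succ k ih => show (vpow v k ++ v).length = _
                 simp [ih]; ring

lemma vpow_prefix (v : Pos) {a b : ℕ} (h : a ≤ b) : vpow v a <+: vpow v b := by
  induction b with
  | zero => simp [Nat.le_zero.mp h]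
  | succ b ih =>
    rcases Nat.lt_or_ge a (b+1) with h' | h'
    · exact (ih (by omega)).trans (show vpow v b <+: vpow v b ++ v from List.prefix_append _ _)
    · have : a = b + 1 := by omega
      subst this; exact List.prefix_refl _

lemma collapse_vpow_append (k : ℕ) (s : Pos) :
    collapse u v hv (u ++ (vpow v k ++ s)) = collapse u v hv (u ++ s) := by
  induction k with
  | zero => simp [vpow]
  | succ k ih =>
    rw [vpow_succ_front, List.append_assoc, collapse_append hv, ih]

lemma collapse_vpow (k : ℕ) : collapse u v hv (u ++ vpow v k) = u := by
  have h := collapse_vpow_append (u := u) hv k []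
  simp only [List.append_nil] at h
  rw [h, collapse_of_short hv (by simp [List.length_pos_iff.mpr hv])]

lemma collapse_take {r : ℕ} (hr : r < v.length) :
    collapse u v hv (u ++ v.take r) = u ++ v.take r := by
  apply collapse_of_short hv
  simp [List.length_take]
  omega

lemma prefix_of_snoc_prefix {w : Pos} {b : Bool} (hp : u ++ v <+: w ++ [b])
    (hlen : (u ++ v).length ≤ w.length) : u ++ v <+: w := by
  have h1 : (w ++ [b]).take (u ++ v).length = w.take (u ++ v).length := by
    rw [List.take_append, Nat.sub_eq_zero_of_le hlen]
    simp
  rw [List.prefix_iff_eq_take] at hp ⊢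
  exact hp.trans h1

lemma eq_snoc_of_prefix {w : Pos} {b : Bool} (hp : u ++ v <+: w ++ [b])
    (hlen : ¬ (u ++ v).length ≤ w.length) : u ++ v = w ++ [b] := by
  apply hp.eq_of_length
  have := hp.length_le
  simp only [List.length_append, List.length_singleton] at *
  omega

lemma drop_snoc {w : Pos} {b : Bool} (hlen : (u ++ v).length ≤ w.length) :
    (w ++ [b]).drop (u ++ v).length = w.drop (u ++ v).length ++ [b] := by
  rw [List.drop_append, Nat.sub_eq_zero_of_le hlen]
  simp

lemma snoc_decomp {w : Pos} {b : Bool} (hpw : u ++ v <+: w) :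
    w ++ [b] = u ++ (v ++ (w.drop (u ++ v).length ++ [b])) := by
  obtain ⟨s, hs⟩ := hpw
  have hds : w.drop (u ++ v).length = s := by rw [← hs, List.drop_left]
  rw [hds, ← hs]
  simp only [List.append_assoc]

/-- Key step lemma: away from exact pump points, collapse commutes with extension. -/
lemma collapse_snoc {w : Pos} {b : Bool} (hb : ∀ k, w ++ [b] ≠ u ++ (v ++ vpow v k)) :
    collapse u v hv (w ++ [b]) = collapse u v hv w ++ [b] := by
  suffices H : ∀ N w (b : Bool), w.length < N → (∀ k, w ++ [b] ≠ u ++ (v ++ vpow v k)) →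
      collapse u v hv (w ++ [b]) = collapse u v hv w ++ [b] from
    H (w.length + 1) w b (Nat.lt_succ_self _) hb
  intro N
  induction N with
  | zero => intro w b hw; omega
  | succ N ih =>
    intro w b hw hb
    by_cases hp : u ++ v <+: w ++ [b]
    · by_cases hlen : (u ++ v).length ≤ w.length
      · have hpw := prefix_of_snoc_prefix hp hlen
        rw [collapse_of_prefix hv hp, collapse_of_prefix hv hpw, drop_snoc hlen,
          ← List.append_assoc]
        have hlt : (u ++ w.drop (u ++ v).length).length < N := by
          simp only [List.length_append, List.length_drop] at *
          have : 0 < v.length := List.length_pos_iff.mpr hv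
          omega
        refine ih _ b hlt (fun k hk => ?_)
        rw [List.append_assoc] at hk
        have h2 := List.append_cancel_left hk
        apply hb (k + 1)
        rw [snoc_decomp hpw, h2, vpow_succ_front]
      · exact absurd ((eq_snoc_of_prefix hp hlen).symm.trans
          (show u ++ v = u ++ (v ++ vpow v 0) by simp [vpow])) (hb 0)
    · have hpw : ¬ u ++ v <+: w := fun h => hp (h.trans (List.prefix_append _ _))
      rw [collapse_of_not_prefix hv hp, collapse_of_not_prefix hv hpw]

/-- Generic transfer of the successor-state property through collapse. -/
lemma collapse_succ_state {Q : Type} (σ : Pos → Q) (c : Pos → Bool → Q)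
    (hrun : ∀ w b, σ (w ++ [b]) = c w b) (huv : σ u = σ (u ++ v)) :
    ∀ w (b : Bool), σ (collapse u v hv (w ++ [b])) = c (collapse u v hv w) b := by
  suffices H : ∀ N w (b : Bool), w.length < N →
      σ (collapse u v hv (w ++ [b])) = c (collapse u v hv w) b from
    fun w b => H (w.length + 1) w b (Nat.lt_succ_self _)
  intro N
  induction N with
  | zero => intro w b hw; omega
  | succ N ih =>
    intro w b hw
    by_cases hp : u ++ v <+: w ++ [b]
    · by_cases hlen : (u ++ v).length ≤ w.length
      · have hpw := prefix_of_snoc_prefix hp hlen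
        rw [collapse_of_prefix hv hp, collapse_of_prefix hv hpw, drop_snoc hlen,
          ← List.append_assoc]
        have hlt : (u ++ w.drop (u ++ v).length).length < N := by
          simp only [List.length_append, List.length_drop] at *
          have : 0 < v.length := List.length_pos_iff.mpr hv
          omega
        exact ih _ b hlt
      · have heq := eq_snoc_of_prefix hp hlen
        have h1 : collapse u v hv (w ++ [b]) = u := by
          rw [← heq]
          have hvv : u ++ v = u ++ vpow v 1 := by simp [vpow]
          rw [hvv, collapse_vpow]
        have h2 : collapse u v hv w = w := by
          apply collapse_of_not_prefix hv
          intro hc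
          have hl1 := hc.length_le
          have hl2 := congrArg List.length heq
          simp only [List.length_append, List.length_singleton] at hl1 hl2
          omega
        rw [h1, h2, huv, heq, hrun]
    · have hpw : ¬ u ++ v <+: w := fun h => hp (h.trans (List.prefix_append _ _))
      rw [collapse_of_not_prefix hv hp, collapse_of_not_prefix hv hpw, hrun]

/-! ### Branch prefixes -/

lemma pre_length (β : ℕ → Bool) (m : ℕ) : (pre β m).length = m := by simp [pre]

lemma pre_succ (β : ℕ → Bool) (m : ℕ) : pre β (m+1) = pre β m ++ [β m] := by
  simp [pre, List.range_succ]

lemma pre_add (β : ℕ → Bool) (a b : ℕ) :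
    pre β (a+b) = pre β a ++ (List.range b).map (fun s => β (a+s)) := by
  simp [pre, List.range_add, List.map_map, Function.comp_def]

lemma pre_prefix (β : ℕ → Bool) {a b : ℕ} (h : a ≤ b) : pre β a <+: pre β b := by
  have hb : b = a + (b - a) := by omega
  rw [hb, pre_add]
  exact List.prefix_append _ _

lemma map_range_getD (l : Pos) : (List.range l.length).map (fun i => l.getD i false) = l := by
  apply List.ext_getElem (by simp)
  intro i h1 h2
  simp [List.getD_eq_getElem l false h2, List.getElem?_eq_getElem h2]

/-- The branch that follows `u` and then cycles through `v` forever. -/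
def spineB (u v : Pos) : ℕ → Bool :=
  fun m => if m < u.length then u.getD m false else v.getD ((m - u.length) % v.length) false

lemma pre_spineB_u : pre (spineB u v) u.length = u := by
  have h : pre (spineB u v) u.length = (List.range u.length).map (fun i => u.getD i false) := by
    apply List.map_congr_left
    intro a ha
    simp only [List.mem_range] at ha
    simp [spineB, ha]
  rw [h, map_range_getD]

lemma spine_spec : ∀ k, pre (spineB u v) (u.length + k * v.length) = u ++ vpow v k := by
  intro k
  induction k with
  | zero => simp [vpow, pre_spineB_u]
  | succ k ih =>
    have hL : u.length + (k+1) * v.length = (u.length + k * v.length) + v.length := by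
      rw [Nat.succ_mul]; omega
    rw [hL, pre_add, ih]
    have h2 : ∀ s ∈ List.range v.length,
        spineB u v (u.length + k * v.length + s) = v.getD s false := by
      intro s hs
      simp only [List.mem_range] at hs
      have h3 : ¬ (u.length + k * v.length + s < u.length) := by omega
      simp only [spineB, if_neg h3]
      congr 1
      have h4 : u.length + k * v.length + s - u.length = k * v.length + s := by omega
      rw [h4, Nat.mul_comm k, Nat.mul_add_mod, Nat.mod_eq_of_lt hs]
    rw [List.map_congr_left h2, map_range_getD]
    show u ++ vpow v k ++ v = u ++ (vpow v k ++ v)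
    rw [List.append_assoc]

/-- Under the spine hypothesis, the branch prefixes have a normal form. -/
lemma spine_pre {β : ℕ → Bool} (hs : ∀ k, pre β (u.length + k * v.length) = u ++ vpow v k) :
    ∀ q r, r ≤ v.length →
      pre β (u.length + (q * v.length + r)) = u ++ (vpow v q ++ v.take r) := by
  intro q r hr
  have hmul : (q+1) * v.length = q * v.length + v.length := Nat.succ_mul q v.length
  have hp1 : pre β (u.length + (q * v.length + r)) <+: pre β (u.length + (q+1) * v.length) :=
    pre_prefix β (by omega)
  rw [hs (q+1)] at hp1
  have hp2 : u ++ (vpow v q ++ v.take r) <+: u ++ vpow v (q+1) := by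
    show _ <+: u ++ (vpow v q ++ v)
    exact (List.prefix_append_right_inj u).mpr
      ((List.prefix_append_right_inj (vpow v q)).mpr (List.take_prefix r v))
  have hlen : (pre β (u.length + (q * v.length + r))).length
      = (u ++ (vpow v q ++ v.take r)).length := by
    simp [pre_length, vpow_length, List.length_take]
    omega
  exact (List.prefix_of_prefix_length_le hp1 hp2 hlen.le).eq_of_length hlen

lemma take_succ_getD {r : ℕ} (hr : r < v.length) :
    v.take (r+1) = v.take r ++ [v.getD r false] := by
  rw [List.take_succ, List.getD_eq_getElem v false hr, List.getElem?_eq_getElem hr]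
  rfl

lemma spine_bit {β : ℕ → Bool} (hs : ∀ k, pre β (u.length + k * v.length) = u ++ vpow v k) :
    ∀ q r, r < v.length → β (u.length + (q * v.length + r)) = v.getD r false := by
  intro q r hr
  have h1 := spine_pre (u := u) hs q r hr.le
  have h2 := spine_pre (u := u) hs q (r+1) (by omega)
  rw [show u.length + (q * v.length + (r+1)) = (u.length + (q * v.length + r)) + 1 by omega,
    pre_succ, h1, take_succ_getD hr] at h2
  simp only [← List.append_assoc] at h2
  have h3 := List.append_cancel_left (List.append_cancel_left
    (by simpa only [List.append_assoc] using h2))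
  simpa using h3

lemma collapse_spine {β : ℕ → Bool}
    (hs : ∀ k, pre β (u.length + k * v.length) = u ++ vpow v k) :
    ∀ q r, r < v.length →
      collapse u v hv (pre β (u.length + (q * v.length + r))) = u ++ v.take r := by
  intro q r hr
  rw [spine_pre (u := u) hs q r hr.le, collapse_vpow_append, collapse_take hv hr]

/-- Off the spine, collapse eventually commutes with taking successors along the branch. -/
lemma nonspine_step {β : ℕ → Bool} {k₀ : ℕ}
    (hk : pre β (u.length + k₀ * v.length) ≠ u ++ vpow v k₀) :
    ∀ m, u.length + k₀ * v.length ≤ m →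
      collapse u v hv (pre β (m+1)) = collapse u v hv (pre β m) ++ [β m] := by
  intro m hm
  rw [pre_succ]
  apply collapse_snoc hv
  intro k hkk
  apply hk
  have hlen : m + 1 = u.length + (k+1) * v.length := by
    have hc := congrArg List.length hkk
    simp only [List.length_append, pre_length, List.length_singleton, vpow_length,
      Nat.succ_mul] at hc ⊢
    omega
  have hk1 : k₀ ≤ k + 1 := by
    have hD : 0 < v.length := List.length_pos_iff.mpr hv
    by_contra hc
    push_neg at hc
    have hmul : (k+1) * v.length < k₀ * v.length :=
      Nat.mul_lt_mul_of_lt_of_le (by omega) le_rfl (by omega)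
    omega
  have hpre0 : pre β (u.length + k₀ * v.length) <+: pre β (m+1) := pre_prefix β (by omega)
  rw [pre_succ, hkk] at hpre0
  have hpw : u ++ vpow v k₀ <+: u ++ (v ++ vpow v k) := by
    rw [← vpow_succ_front]
    exact (List.prefix_append_right_inj u).mpr (vpow_prefix v hk1)
  have hlen2 : (pre β (u.length + k₀ * v.length)).length = (u ++ vpow v k₀).length := by
    simp [pre_length, vpow_length]
  exact (List.prefix_of_prefix_length_le hpre0 hpw hlen2.le).eq_of_length hlen2

/-! ### Parity-acceptance transfer lemmas -/

lemma pa_shift {c c' : ℕ → ℕ} (a b : ℕ) (h : ∀ k, c (a + k) = c' (b + k))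
    (h' : ParityAccepting c') : ParityAccepting c := by
  obtain ⟨p, hp, hfreq, hev⟩ := h'
  refine ⟨p, hp, ?_, ?_⟩
  · rw [Filter.frequently_atTop] at hfreq ⊢
    intro N
    obtain ⟨n, hn, he⟩ := hfreq (b + N)
    refine ⟨a + (n - b), by omega, ?_⟩
    have hb : b + (n - b) = n := by omega
    rw [h (n - b), hb, he]
  · rw [Filter.eventually_atTop] at hev ⊢
    obtain ⟨N, hN⟩ := hev
    refine ⟨a + N, fun n hn => ?_⟩
    have h1 : n = a + (n - a) := by omega
    rw [h1, h (n - a)]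
    exact hN _ (by omega)

lemma pa_spine {c f : ℕ → ℕ} {D a j : ℕ} (hD : 0 < D)
    (h : ∀ q r, r < D → c (a + (q * D + r)) = f r)
    (hje : Even j) (hle : ∀ r, r < D → f r ≤ j) (hex : ∃ r, r < D ∧ f r = j) :
    ParityAccepting c := by
  obtain ⟨r₀, hr₀, hf₀⟩ := hex
  refine ⟨j, hje, ?_, ?_⟩
  · rw [Filter.frequently_atTop]
    intro N
    refine ⟨a + (N * D + r₀), ?_, by rw [h N r₀ hr₀, hf₀]⟩
    have h1 : N ≤ N * D := Nat.le_mul_of_pos_right N hD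
    omega
  · rw [Filter.eventually_atTop]
    refine ⟨a, fun mm hm => ?_⟩
    have h2 : (mm - a) / D * D + (mm - a) % D = mm - a := Nat.div_add_mod' _ _
    have h4 := h ((mm - a) / D) ((mm - a) % D) (Nat.mod_lt _ hD)
    rw [h2, Nat.add_sub_cancel' hm] at h4
    rw [h4]
    exact hle _ (Nat.mod_lt _ hD)

lemma pa_spine_odd {c f : ℕ → ℕ} {D a i : ℕ} (hD : 0 < D)
    (h : ∀ q r, r < D → c (a + (q * D + r)) = f r)
    (hio : Odd i) (hle : ∀ r, r < D → f r ≤ i) (hex : ∃ r, r < D ∧ f r = i)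
    (hpa : ParityAccepting c) : False := by
  obtain ⟨p, hpe, hfreq, hev⟩ := hpa
  obtain ⟨r₀, hr₀, hf₀⟩ := hex
  rw [Filter.eventually_atTop] at hev
  obtain ⟨N, hN⟩ := hev
  have hip : i ≤ p := by
    have h1 := h N r₀ hr₀
    rw [hf₀] at h1
    have h2 : N ≤ a + (N * D + r₀) := by
      have h3 : N ≤ N * D := Nat.le_mul_of_pos_right N hD
      omega
    calc i = c (a + (N * D + r₀)) := h1.symm
    _ ≤ p := hN _ h2
  have hpi : p ≤ i := by
    rw [Filter.frequently_atTop] at hfreq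
    obtain ⟨mm, hmm, hc⟩ := hfreq a
    have h2 : (mm - a) / D * D + (mm - a) % D = mm - a := Nat.div_add_mod' _ _
    have h4 := h ((mm - a) / D) ((mm - a) % D) (Nat.mod_lt _ hD)
    rw [h2, Nat.add_sub_cancel' hmm, hc] at h4
    rw [h4]
    exact hle _ (Nat.mod_lt _ hD)
  have hpii : p = i := le_antisymm hpi hip
  subst hpii
  exact (Nat.not_odd_iff_even.mpr hpe) hio


/-- Acceptance of branches of the collapsed run that leave the spine. -/
lemma pa_nonspine {Alph : Type} (M : NPA Alph) (ρ : Pos → M.Q × Alph × M.Q × M.Q)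
    {u v : Pos} (hv : v ≠ []) (hacc : AcceptingRun M ρ) {β : ℕ → Bool} {m₀ : ℕ}
    (hstep : ∀ m, m₀ ≤ m →
      collapse u v hv (pre β (m+1)) = collapse u v hv (pre β m) ++ [β m]) :
    ParityAccepting (branchPrio M (fun w => ρ (collapse u v hv w)) β) := by
  obtain ⟨w₀, hw₀⟩ : ∃ w₀, collapse u v hv (pre β m₀) = w₀ := ⟨_, rfl⟩
  have hcoll : ∀ k, collapse u v hv (pre β (m₀ + k))
      = w₀ ++ (List.range k).map (fun s => β (m₀ + s)) := by
    intro k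
    induction k with
    | zero => simpa using hw₀
    | succ k ih =>
      rw [show m₀ + (k+1) = (m₀ + k) + 1 by omega, hstep _ (by omega), ih, List.range_succ]
      simp [List.append_assoc]
  set γ : ℕ → Bool :=
    fun l => if l < w₀.length then w₀.getD l false else β (m₀ + (l - w₀.length)) with hγ
  have hγ3 : ∀ k, γ (w₀.length + k) = β (m₀ + k) := by
    intro k
    simp only [hγ]
    rw [if_neg (by omega), Nat.add_sub_cancel_left]
  have hγ2 : ∀ k, pre γ (w₀.length + k) = w₀ ++ (List.range k).map (fun s => β (m₀ + s)) := by
    intro k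
    rw [pre_add]
    have h1 : pre γ w₀.length = w₀ := by
      have h : pre γ w₀.length = (List.range w₀.length).map (fun i => w₀.getD i false) := by
        apply List.map_congr_left
        intro a ha
        simp only [List.mem_range] at ha
        simp [hγ, ha]
      rw [h, map_range_getD]
    rw [h1]
    congr 1
    exact List.map_congr_left (fun a _ => hγ3 a)
  refine pa_shift m₀ w₀.length (fun k => ?_) (hacc γ)
  show (if β (m₀ + k) then (M.Ω (ρ (collapse u v hv (pre β (m₀ + k))))).2
      else (M.Ω (ρ (collapse u v hv (pre β (m₀ + k))))).1) = branchPrio M ρ γ (w₀.length + k)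
  rw [hcoll k, ← hγ2 k, ← hγ3 k]
  rfl

/-! ### The pumped run -/

lemma isRun_collapse {Alph : Type} (M : NPA Alph) (t : Pos → Alph)
    (ρ : Pos → M.Q × Alph × M.Q × M.Q) (h : IsRun M t ρ)
    (h1 : (ρ u).1 = (ρ (u ++ v)).1) :
    IsRun M (fun w => t (collapse u v hv w)) (fun w => ρ (collapse u v hv w)) := by
  obtain ⟨hΔ, ht, h0, hsucc⟩ := h
  refine ⟨fun w => hΔ _, fun w => ht _, ?_, ?_⟩
  · show (ρ (collapse u v hv [])).1 = M.qinit
    rw [collapse_of_short hv (by simp [List.length_pos_iff.mpr hv])]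
    exact h0
  · intro w b
    exact collapse_succ_state hv (fun w => (ρ w).1)
      (fun w b => if b then (ρ w).2.2.2 else (ρ w).2.2.1) hsucc h1 w b

lemma branch_spine_prio {Alph : Type} (M : NPA Alph) (ρ : Pos → M.Q × Alph × M.Q × M.Q)
    {β : ℕ → Bool} (hs : ∀ k, pre β (u.length + k * v.length) = u ++ vpow v k) :
    ∀ q r, r < v.length →
      branchPrio M (fun w => ρ (collapse u v hv w)) β (u.length + (q * v.length + r))
        = segPrio M ρ u v r := by
  intro q r hr
  have h1 := collapse_spine hv (u := u) hs q r hr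
  have h2 := spine_bit (u := u) hs q r hr
  show (if β (u.length + (q * v.length + r)) then
      (M.Ω (ρ (collapse u v hv (pre β (u.length + (q * v.length + r)))))).2
    else (M.Ω (ρ (collapse u v hv (pre β (u.length + (q * v.length + r)))))).1) = _
  rw [h1, h2]
  rfl

end Guided

open NPA in
/-- if the language of a guidable automaton A is recognised by B, then for
n = |A|·|B| + 1, for every accepting run ρ_B of B on a tree t and the run ρ_A of A on t
guided by ρ_B (via an acceptance-preserving guiding function), the labelling induced by
ρ_A is n-bound by the labelling induced by ρ_B. -/
theorem guided_run_nbound {Alph : Type} (A B : NPA Alph)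
    [Fintype A.Q] [Fintype B.Q] (t : NPA.Pos → Alph)
    (ρA : NPA.Pos → A.Q × Alph × A.Q × A.Q) (ρB : NPA.Pos → B.Q × Alph × B.Q × B.Q)
    (hrunA : IsRun A t ρA) (hrunB : IsRun B t ρB)
    (haccB : AcceptingRun B ρB)
    (g : A.Q × (B.Q × Alph × B.Q × B.Q) → A.Q × Alph × A.Q × A.Q)
    (hg : IsGuidingFun A B g) (hpres : PreservesAcceptance A B g)
    (hguided : GuidedBy A B g ρA ρB) :
    NBound treeEdges (runLabel A ρA) (runLabel B ρB)
      (Fintype.card A.Q * Fintype.card B.Q + 1) := by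
  simp only [NBound, MaxSegLabel]
  rintro ⟨π, tt, i, j, hi, hj, hmono, hedge, hseg⟩
  set n : ℕ := Fintype.card A.Q * Fintype.card B.Q + 1 with hn
  -- strict monotonicity of the segment endpoints
  have hmono' : ∀ y, y ≤ n+1 → ∀ x, x < y → tt x < tt y := by
    intro y
    induction y with
    | zero => intro _ x hx; exact absurd hx (Nat.not_lt_zero x)
    | succ y ih =>
      intro hy x hx
      rcases Nat.lt_succ_iff_lt_or_eq.mp hx with h | h
      · exact (ih (by omega) x h).trans (hmono y (by omega))
      · subst h; exact hmono x (by omega)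
  -- pigeonhole on pairs of states at segment endpoints
  have hcard : Fintype.card (A.Q × B.Q) < Fintype.card (Fin (n+2)) := by
    simp only [Fintype.card_prod, Fintype.card_fin]
    omega
  obtain ⟨x, y, hxy, hfeq⟩ := Fintype.exists_ne_map_eq_of_card_lt
    (fun m : Fin (n+2) => ((ρA (π (tt m.val))).1, (ρB (π (tt m.val))).1)) hcard
  have hmex : ∃ m m' : ℕ, m < m' ∧ m' ≤ n+1 ∧
      (ρA (π (tt m))).1 = (ρA (π (tt m'))).1 ∧ (ρB (π (tt m))).1 = (ρB (π (tt m'))).1 := by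
    obtain ⟨h1, h2⟩ := Prod.mk.inj hfeq
    rcases lt_or_gt_of_ne hxy with h | h
    · exact ⟨x.val, y.val, Fin.lt_def.mp h, by have := y.isLt; omega, h1, h2⟩
    · exact ⟨y.val, x.val, Fin.lt_def.mp h, by have := x.isLt; omega, h1.symm, h2.symm⟩
  obtain ⟨m, m', hmm', hm'le, hfa, hfb⟩ := hmex
  have halt : tt m < tt m' := hmono' m' hm'le m hmm'
  have hmtt : tt m' ≤ tt (n+1) := by
    rcases Nat.lt_or_ge m' (n+1) with h | h
    · exact (hmono' (n+1) le_rfl m' h).le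
    · have hx : m' = n+1 := by omega
      rw [hx]
  -- the bits along the path
  have hedge' : ∀ l, l < tt (n+1) → ∃ b : Bool, π (l+1) = π l ++ [b] := hedge
  obtain ⟨b', hstep⟩ : ∃ b' : ℕ → Bool, ∀ l, l < tt (n+1) → π (l+1) = π l ++ [b' l] := by
    refine ⟨fun l => if h : l < tt (n+1) then (hedge' l h).choose else false, fun l hl => ?_⟩
    simp only [dif_pos hl]
    exact (hedge' l hl).choose_spec
  set d : ℕ := tt m' - tt m with hd
  set u : NPA.Pos := π (tt m) with hu
  set v : NPA.Pos := (List.range d).map (fun s => b' (tt m + s)) with hv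
  have hvlen : v.length = d := by simp [hv]
  have hdpos : 0 < d := by omega
  have hvne : v ≠ [] := by
    intro h
    rw [h] at hvlen
    simp only [List.length_nil] at hvlen
    omega
  have hvget : ∀ s, s < d → v.getD s false = b' (tt m + s) := by
    intro s hs
    have hs' : s < v.length := by omega
    rw [List.getD_eq_getElem v false hs']
    simp [hv]
  have hpos : ∀ s, s ≤ d → π (tt m + s) = u ++ v.take s := by
    intro s hs
    induction s with
    | zero => simp [hu]
    | succ s ih =>
      have hs' : s ≤ d := by omega
      have hl : tt m + s < tt (n+1) := by omega
      have ht : v.take (s+1) = v.take s ++ [v.getD s false] :=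
        Guided.take_succ_getD (by omega)
      rw [show tt m + (s+1) = (tt m + s) + 1 by omega, hstep _ hl, ih hs', ht,
        hvget s (by omega), List.append_assoc]
  have huv : u ++ v = π (tt m') := by
    have h1 := hpos d le_rfl
    rw [show tt m + d = tt m' by omega] at h1
    rw [h1]
    congr 1
    rw [← hvlen]
    exact (List.take_length (l := v)).symm
  have huvA : (ρA u).1 = (ρA (u ++ v)).1 := by rw [huv]; exact hfa
  have huvB : (ρB u).1 = (ρB (u ++ v)).1 := by rw [huv]; exact hfb
  -- segment priorities coincide with the edge labels along the path
  have hlabel : ∀ (M : NPA Alph) (ρ : NPA.Pos → M.Q × Alph × M.Q × M.Q), ∀ s, s < d →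
      segPrio M ρ u v s = runLabel M ρ (π (tt m + s), π (tt m + s + 1)) := by
    intro M ρ s hs
    have h1 : π (tt m + s) = u ++ v.take s := hpos s hs.le
    have h2 : π (tt m + s + 1) = π (tt m + s) ++ [b' (tt m + s)] := hstep _ (by omega)
    show (if v.getD s false = true then (M.Ω (ρ (u ++ v.take s))).2
        else (M.Ω (ρ (u ++ v.take s))).1)
      = runLabel M ρ (π (tt m + s), π (tt m + s + 1))
    rw [hvget s hs, ← h1]
    cases hcb : b' (tt m + s) with
    | false =>
      have h3 : ¬ π (tt m + s + 1) = π (tt m + s) ++ [true] := by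
        rw [h2, hcb]; simp
      simp [runLabel, h3]
    | true =>
      have h3 : π (tt m + s + 1) = π (tt m + s) ++ [true] := by rw [h2, hcb]
      simp [runLabel, h3]
  -- locating a pointwise position inside one of the given segments
  have hfind : ∀ c l, l < tt c → m < c → tt m ≤ l →
      ∃ k, m ≤ k ∧ k + 1 ≤ c ∧ tt k ≤ l ∧ l < tt (k+1) := by
    intro c
    induction c with
    | zero => intro l _ hmc _; omega
    | succ c ih =>
      intro l hl hmc hml
      by_cases hc : tt c ≤ l
      · exact ⟨c, by omega, le_rfl, hc, hl⟩
      · push_neg at hc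
        have hmcc : m < c := by
          rcases Nat.lt_or_ge m c with h | h
          · exact h
          · exfalso
            have hmc2 : m = c := by omega
            rw [hmc2] at hml
            omega
        obtain ⟨k, h1, h2, h3, h4⟩ := ih l hc hmcc hml
        exact ⟨k, h1, by omega, h3, h4⟩
  -- bounds and attainment for the segment priorities
  have hALe : ∀ s, s < d → segPrio A ρA u v s ≤ i := by
    intro s hs
    obtain ⟨k, hk1, hk2, hk3, hk4⟩ := hfind m' (tt m + s) (by omega) hmm' (by omega)
    have h5 := ((hseg k (by omega)).1).1 (tt m + s) hk3 hk4
    rw [hlabel A ρA s hs]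
    exact h5
  have hBLe : ∀ s, s < d → segPrio B ρB u v s ≤ j := by
    intro s hs
    obtain ⟨k, hk1, hk2, hk3, hk4⟩ := hfind m' (tt m + s) (by omega) hmm' (by omega)
    have h5 := ((hseg k (by omega)).2).1 (tt m + s) hk3 hk4
    rw [hlabel B ρB s hs]
    exact h5
  have hsub : tt (m+1) ≤ tt m' := by
    rcases Nat.lt_or_ge (m+1) m' with h | h
    · exact (hmono' m' hm'le (m+1) h).le
    · have hx : m + 1 = m' := by omega
      rw [hx]
  have hAEx : ∃ s, s < d ∧ segPrio A ρA u v s = i := by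
    obtain ⟨l, hl1, hl2, hl3⟩ := ((hseg m (by omega)).1).2
    refine ⟨l - tt m, by omega, ?_⟩
    rw [hlabel A ρA (l - tt m) (by omega), show tt m + (l - tt m) = l by omega]
    exact hl3
  have hBEx : ∃ s, s < d ∧ segPrio B ρB u v s = j := by
    obtain ⟨l, hl1, hl2, hl3⟩ := ((hseg m (by omega)).2).2
    refine ⟨l - tt m, by omega, ?_⟩
    rw [hlabel B ρB (l - tt m) (by omega), show tt m + (l - tt m) = l by omega]
    exact hl3
  -- the pumped tree and runs
  have hrunA' := Guided.isRun_collapse (u := u) (v := v) hvne A t ρA hrunA huvA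
  have hrunB' := Guided.isRun_collapse (u := u) (v := v) hvne B t ρB hrunB huvB
  have hguided' : GuidedBy A B g (fun w => ρA (Guided.collapse u v hvne w))
      (fun w => ρB (Guided.collapse u v hvne w)) := fun w => hguided _
  have haccB' : AcceptingRun B (fun w => ρB (Guided.collapse u v hvne w)) := by
    intro β
    by_cases hsp : ∀ k, pre β (u.length + k * v.length) = u ++ Guided.vpow v k
    · exact Guided.pa_spine (by omega : 0 < v.length)
        (Guided.branch_spine_prio hvne B ρB hsp) hj
        (fun r hr => hBLe r (by omega))
        (by obtain ⟨s, h1, h2⟩ := hBEx; exact ⟨s, by omega, h2⟩)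
    · push_neg at hsp
      obtain ⟨k₀, hk₀⟩ := hsp
      exact Guided.pa_nonspine B ρB hvne haccB (Guided.nonspine_step hvne hk₀)
  have haccA' : AcceptingRun A (fun w => ρA (Guided.collapse u v hvne w)) :=
    hpres (fun w => t (Guided.collapse u v hvne w)) _ _ hrunB' hrunA' hguided' haccB'
  -- contradiction on the spine branch
  exact Guided.pa_spine_odd (by omega : 0 < v.length)
    (Guided.branch_spine_prio hvne A ρA (Guided.spine_spec (u := u) (v := v)))
    hi (fun r hr => hALe r (by omega))
    (by obtain ⟨s, h1, h2⟩ := hAEx; exact ⟨s, by omega, h2⟩)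
    (haccA' (Guided.spineB u v))
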